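/- Let μ be a Borel probability measure and g a positive measurable function such that g^{2/p} is μ-integrable for all p ∈ (1,2], g² log g² is μ-integrable, and μ(g^{2/p}) > 0 for all p ∈ (1,2]. Then the functional G(p) = (p/(2(p−1)²)) · [ μ(g²) − μ(g^{2/p})^p · (μ(g²)/μ(g^{2/p})^p)^{(2/p)−1} ] satisfies G(2) = Var_μ(g) = μ(g²) − μ(g)², and G(p) tends to Ent_μ(g²) = μ(g² log g²) − μ(g²) log μ(g²) as p tends to 1 from above. -/

import Mathlib

open MeasureTheory Filter Topology

lemma aux_deriv (c : ℝ) (hc : 0 < c) (q : ℝ) (hq : q ≠ 0) :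
    HasDerivAt (fun t => c ^ (2/t)) (c ^ (2/q) * (Real.log c * (-2/q^2))) q := by
  have h1 : HasDerivAt (fun t : ℝ => 2/t) (-2/q^2) q := by
    have := (hasDerivAt_inv hq).const_mul (2:ℝ)
    simpa [div_eq_mul_inv, neg_div] using this
  have h2 : HasDerivAt (fun t => Real.log c * (2/t)) (Real.log c * (-2/q^2)) q :=
    h1.const_mul _
  have h3 := h2.exp
  have he : (fun t => c ^ (2/t)) = fun t => Real.exp (Real.log c * (2/t)) :=
    funext fun t => Real.rpow_def_of_pos hc _
  rw [he, Real.rpow_def_of_pos hc]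
  exact h3

lemma aux_dbound (c : ℝ) (hc : 0 < c) {q : ℝ} (hq1 : 1 ≤ q) (hq2 : q ≤ 2) :
    |c ^ (2/q) * (Real.log c * (-2/q^2))| ≤ |c ^ (2:ℝ) * Real.log (c ^ (2:ℝ))| + 2 := by
  have hq0 : 0 < q := lt_of_lt_of_le one_pos hq1
  have habs : |c ^ (2/q) * (Real.log c * (-2/q^2))|
      = c ^ (2/q) * |Real.log c| * (2/q^2) := by
    rw [abs_mul, abs_mul, abs_of_pos (Real.rpow_pos_of_pos hc _), abs_div, abs_neg]
    rw [abs_of_pos (by positivity : (0:ℝ) < q^2), abs_of_pos (by norm_num : (0:ℝ) < 2)]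
    ring
  rw [habs]
  have hqq : 2/q^2 ≤ 2 := by
    rw [div_le_iff₀ (by positivity)]
    nlinarith
  rcases le_or_gt 1 c with h1 | h1
  · have hle : c ^ (2/q) ≤ c ^ (2:ℝ) := by
      apply Real.rpow_le_rpow_of_exponent_le h1
      rw [div_le_iff₀ hq0]; nlinarith
    have key : c ^ (2/q) * |Real.log c| * (2/q^2) ≤ c ^ (2:ℝ) * |Real.log c| * 2 := by
      have h0 : 0 ≤ |Real.log c| := abs_nonneg _
      have h3 : 0 ≤ 2/q^2 := by positivity
      calc c ^ (2/q) * |Real.log c| * (2/q^2) ≤ c ^ (2:ℝ) * |Real.log c| * (2/q^2) := by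
            apply mul_le_mul_of_nonneg_right (mul_le_mul_of_nonneg_right hle h0) h3
        _ ≤ c ^ (2:ℝ) * |Real.log c| * 2 := by
            apply mul_le_mul_of_nonneg_left hqq (by positivity)
    have heq : |c ^ (2:ℝ) * Real.log (c ^ (2:ℝ))| = c ^ (2:ℝ) * |Real.log c| * 2 := by
      rw [Real.log_rpow hc, abs_mul, abs_mul, abs_of_pos (Real.rpow_pos_of_pos hc _),
        abs_of_pos (by norm_num : (0:ℝ) < 2)]
      ring
    rw [heq]
    linarith
  · have hle : c ^ (2/q) ≤ c := by
      calc c ^ (2/q) ≤ c ^ (1:ℝ) := by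
            apply Real.rpow_le_rpow_of_exponent_ge hc h1.le
            rw [le_div_iff₀ hq0]; nlinarith
        _ = c := Real.rpow_one c
    have hlog : |Real.log c| = -Real.log c := by
      rw [abs_of_nonpos (Real.log_nonpos hc.le h1.le)]
    have hbd : c * (-Real.log c) ≤ 1 := by
      have := Real.log_le_sub_one_of_pos (show (0:ℝ) < c⁻¹ by positivity)
      rw [Real.log_inv] at this
      have hci : c * c⁻¹ = 1 := mul_inv_cancel₀ hc.ne'
      nlinarith [mul_le_mul_of_nonneg_left this hc.le]
    have hkey : c ^ (2/q) * |Real.log c| * (2/q^2) ≤ (c * (-Real.log c)) * 2 := by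
      rw [hlog]
      have h0 : 0 ≤ -Real.log c := by rw [← hlog]; exact abs_nonneg _
      calc c ^ (2/q) * (-Real.log c) * (2/q^2) ≤ c * (-Real.log c) * (2/q^2) := by
            apply mul_le_mul_of_nonneg_right (mul_le_mul_of_nonneg_right hle h0) (by positivity)
        _ ≤ c * (-Real.log c) * 2 := mul_le_mul_of_nonneg_left hqq (by positivity)
    have h2 : (c * (-Real.log c)) * 2 ≤ 2 := by nlinarith
    have h3 : 0 ≤ |c ^ (2:ℝ) * Real.log (c ^ (2:ℝ))| := abs_nonneg _
    linarith

lemma aux_slope_bound (c : ℝ) (hc : 0 < c) {p : ℝ} (hp : p ∈ Set.Ioc (1:ℝ) 2) :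
    |(p-1)⁻¹ * (c ^ (2/p) - c ^ (2:ℝ))| ≤ |c ^ (2:ℝ) * Real.log (c ^ (2:ℝ))| + 2 := by
  obtain ⟨hp1, hp2⟩ := hp
  have hcont : ContinuousOn (fun t => c ^ (2/t)) (Set.Icc 1 p) := by
    intro q hq
    have hq0 : q ≠ 0 := by
      have := hq.1; intro h; rw [h] at this; linarith
    exact (aux_deriv c hc q hq0).continuousAt.continuousWithinAt
  have hderiv : ∀ q ∈ Set.Ioo (1:ℝ) p,
      HasDerivAt (fun t => c ^ (2/t)) (c ^ (2/q) * (Real.log c * (-2/q^2))) q :=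
    fun q hq => aux_deriv c hc q (by intro h; have := hq.1; rw [h] at this; linarith)
  obtain ⟨ξ, hξ, hslope⟩ := exists_hasDerivAt_eq_slope (fun t => c ^ (2/t)) _ hp1 hcont hderiv
  have h1 : c ^ (2/(1:ℝ)) = c ^ (2:ℝ) := by norm_num
  have heq : (p-1)⁻¹ * (c ^ (2/p) - c ^ (2:ℝ)) = c ^ (2/ξ) * (Real.log c * (-2/ξ^2)) := by
    rw [hslope, h1]
    field_simp
  rw [heq]
  exact aux_dbound c hc hξ.1.le (le_trans hξ.2.le hp2)

noncomputable def auxPsi (v : ℝ) : ℝ := if v = 0 then 1 else (Real.exp v - 1)/v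

lemma auxPsi_tendsto : Tendsto auxPsi (𝓝 0) (𝓝 1) := by
  rw [← nhdsNE_sup_pure (0:ℝ), tendsto_sup]
  constructor
  · have hd := Real.hasDerivAt_exp 0
    rw [hasDerivAt_iff_tendsto_slope] at hd
    rw [Real.exp_zero] at hd
    apply hd.congr'
    filter_upwards [self_mem_nhdsWithin] with v hv
    have hv0 : v ≠ 0 := hv
    simp [slope_def_field, auxPsi, hv0, Real.exp_zero]
  · have : auxPsi 0 = 1 := by simp [auxPsi]
    rw [← this]
    exact tendsto_pure_nhds auxPsi 0

noncomputable def auxLam (A : ℝ) (y : ℝ) : ℝ :=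
  if y = A then A⁻¹ else (Real.log y - Real.log A)/(y - A)

lemma auxLam_tendsto {A : ℝ} (hA : 0 < A) : Tendsto (auxLam A) (𝓝 A) (𝓝 A⁻¹) := by
  rw [← nhdsNE_sup_pure A, tendsto_sup]
  constructor
  · have hd := Real.hasDerivAt_log hA.ne'
    rw [hasDerivAt_iff_tendsto_slope] at hd
    apply hd.congr'
    filter_upwards [self_mem_nhdsWithin] with y hy
    have hy0 : y ≠ A := hy
    simp [slope_def_field, auxLam, hy0]
  · have : auxLam A A = A⁻¹ := by simp [auxLam]
    rw [← this]
    exact tendsto_pure_nhds (auxLam A) A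

theorem refined_phi_entropy_functional_interpolation
    {Ω : Type*} [MeasurableSpace Ω] (μ : Measure Ω) [IsProbabilityMeasure μ]
    (g : Ω → ℝ) (hg : Measurable g) (hgpos : ∀ x, 0 < g x)
    (hg2 : Integrable (fun x => g x ^ (2 : ℝ)) μ)
    (hint : ∀ p ∈ Set.Ioc (1 : ℝ) 2, Integrable (fun x => g x ^ (2 / p)) μ)
    (hpos : ∀ p ∈ Set.Ioc (1 : ℝ) 2, 0 < ∫ x, g x ^ (2 / p) ∂μ)
    (hent : Integrable (fun x => g x ^ (2 : ℝ) * Real.log (g x ^ (2 : ℝ))) μ)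
    (G : ℝ → ℝ)
    (hG : ∀ p : ℝ, G p =
      p / (2 * (p - 1) ^ 2) *
        ((∫ x, g x ^ (2 : ℝ) ∂μ) - (∫ x, g x ^ (2 / p) ∂μ) ^ p *
          ((∫ x, g x ^ (2 : ℝ) ∂μ) / (∫ x, g x ^ (2 / p) ∂μ) ^ p) ^ (2 / p - 1))) :
    G 2 = (∫ x, g x ^ (2 : ℝ) ∂μ) - (∫ x, g x ∂μ) ^ 2 ∧
      Tendsto G (𝓝[>] (1 : ℝ))
        (𝓝 ((∫ x, g x ^ (2 : ℝ) * Real.log (g x ^ (2 : ℝ)) ∂μ) -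
          (∫ x, g x ^ (2 : ℝ) ∂μ) * Real.log (∫ x, g x ^ (2 : ℝ) ∂μ))) := by
  set A : ℝ := ∫ x, g x ^ (2 : ℝ) ∂μ with hA_def
  set Ep : ℝ := ∫ x, g x ^ (2 : ℝ) * Real.log (g x ^ (2 : ℝ)) ∂μ with hEp_def
  set N : ℝ → ℝ := fun p => ∫ x, g x ^ (2 / p) ∂μ with hN_def
  -- A > 0
  have hA : 0 < A := by
    rw [hA_def]
    rw [integral_pos_iff_support_of_nonneg
      (fun x => (Real.rpow_pos_of_pos (hgpos x) _).le) hg2]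
    have : Function.support (fun x => g x ^ (2:ℝ)) = Set.univ := by
      ext x
      simp only [Function.mem_support, Set.mem_univ, iff_true]
      exact (Real.rpow_pos_of_pos (hgpos x) _).ne'
    rw [this]
    simp
  constructor
  · -- G 2 = A - (∫ g)²
    rw [hG 2]
    simp only [show (2:ℝ)/2 = 1 from by norm_num, Real.rpow_one, sub_self,
      Real.rpow_zero, mul_one]
    rw [show ((∫ x, g x ∂μ) : ℝ) ^ (2:ℝ) = (∫ x, g x ∂μ) ^ (2:ℕ) by
      rw [← Real.rpow_natCast]; norm_num]
    norm_num
  · -- the limit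
    have hIoc : Set.Ioc (1:ℝ) 2 ∈ 𝓝[>] (1:ℝ) :=
      Ioc_mem_nhdsGT_of_mem ⟨le_refl 1, one_lt_two⟩
    -- Step 1: difference quotient of N
    have hDQ : Tendsto (fun p => (p-1)⁻¹ * (N p - A)) (𝓝[>] (1:ℝ)) (𝓝 (-Ep)) := by
      have key : Tendsto (fun p => ∫ x, (p-1)⁻¹ * (g x ^ (2/p) - g x ^ (2:ℝ)) ∂μ)
          (𝓝[>] (1:ℝ)) (𝓝 (∫ x, -(g x ^ (2:ℝ) * Real.log (g x ^ (2:ℝ))) ∂μ)) := by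
        apply tendsto_integral_filter_of_dominated_convergence
          (fun x => |g x ^ (2:ℝ) * Real.log (g x ^ (2:ℝ))| + 2)
        · filter_upwards [hIoc] with p hp
          exact (((hint p hp).sub hg2).const_mul _).aestronglyMeasurable
        · filter_upwards [hIoc] with p hp
          apply ae_of_all
          intro x
          rw [Real.norm_eq_abs]
          exact aux_slope_bound (g x) (hgpos x) hp
        · exact hent.abs.add (integrable_const 2)
        · apply ae_of_all
          intro x
          have hd := aux_deriv (g x) (hgpos x) 1 one_ne_zero
          rw [hasDerivAt_iff_tendsto_slope] at hd
          have hval : g x ^ (2/(1:ℝ)) * (Real.log (g x) * (-2/(1:ℝ)^2))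
              = -(g x ^ (2:ℝ) * Real.log (g x ^ (2:ℝ))) := by
            rw [Real.log_rpow (hgpos x), show (2:ℝ)/(1:ℝ) = 2 from by norm_num]
            ring
          rw [hval] at hd
          have hd' := hd.mono_left
            (nhdsWithin_mono 1 (fun y (hy : y ∈ Set.Ioi 1) => Set.mem_compl_singleton_iff.mpr (ne_of_gt hy)))
          apply hd'.congr
          intro p
          have h21 : g x ^ (2/(1:ℝ)) = g x ^ (2:ℝ) := by norm_num
          rw [slope_def_field, h21]
          ring
      have hEq : ∀ᶠ p in 𝓝[>] (1:ℝ),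
          (∫ x, (p-1)⁻¹ * (g x ^ (2/p) - g x ^ (2:ℝ)) ∂μ) = (p-1)⁻¹ * (N p - A) := by
        filter_upwards [hIoc] with p hp
        rw [integral_const_mul, integral_sub (hint p hp) hg2]
      rw [integral_neg] at key
      exact key.congr' hEq
    -- Step 2: N → A
    have hNt : Tendsto N (𝓝[>] (1:ℝ)) (𝓝 A) := by
      have h1 : Tendsto (fun p : ℝ => p - 1) (𝓝[>] (1:ℝ)) (𝓝 0) := by
        have : Tendsto (fun p : ℝ => p - 1) (𝓝 (1:ℝ)) (𝓝 0) := by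
          have h := ((continuous_id (X := ℝ)).sub (continuous_const (y := (1:ℝ)))).tendsto (1:ℝ)
          convert h using 2 <;> simp
        exact this.mono_left nhdsWithin_le_nhds
      have h2 := hDQ.mul h1
      rw [mul_zero] at h2
      have h3 : Tendsto (fun p => N p - A) (𝓝[>] (1:ℝ)) (𝓝 0) := by
        apply h2.congr'
        filter_upwards [self_mem_nhdsWithin] with p hp
        have hp1 : p - 1 ≠ 0 := sub_ne_zero.mpr (ne_of_gt hp)
        field_simp
      have h4 := h3.add (tendsto_const_nhds (x := A))
      rw [zero_add] at h4
      apply h4.congr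
      intro p; ring
    -- Step 3-5: S p → A⁻¹ * (-Ep) + log A
    set S : ℝ → ℝ := fun p => (p-1)⁻¹ * (Real.log (N p) - Real.log A / p) with hS_def
    have hSt : Tendsto S (𝓝[>] (1:ℝ)) (𝓝 (A⁻¹ * (-Ep) + Real.log A)) := by
      have hΛ : Tendsto (fun p => auxLam A (N p)) (𝓝[>] (1:ℝ)) (𝓝 A⁻¹) :=
        (auxLam_tendsto hA).comp hNt
      have hpt : Tendsto (fun p : ℝ => p) (𝓝[>] (1:ℝ)) (𝓝 1) :=
        tendsto_id.mono_left nhdsWithin_le_nhds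
      have hlogA : Tendsto (fun p : ℝ => Real.log A / p) (𝓝[>] (1:ℝ)) (𝓝 (Real.log A)) := by
        have := (tendsto_const_nhds (x := Real.log A)).div hpt one_ne_zero
        convert this using 2 <;> simp
      have hmain := (hΛ.mul hDQ).add hlogA
      apply hmain.congr'
      filter_upwards [self_mem_nhdsWithin] with p hp
      have hp1 : (1:ℝ) < p := hp
      have hpne : p - 1 ≠ 0 := sub_ne_zero.mpr (ne_of_gt hp1)
      have hp0 : p ≠ 0 := by linarith
      rcases eq_or_ne (N p) A with hNA | hNA
      · simp only [auxLam, if_pos hNA, hS_def, hNA]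
        field_simp
        ring
      · simp only [auxLam, if_neg hNA, hS_def]
        have hNAne : N p - A ≠ 0 := sub_ne_zero.mpr hNA
        field_simp
        ring
    -- Step 6: u → 0
    set u : ℝ → ℝ := fun p => 2*(p-1)*(Real.log (N p) - Real.log A / p) with hu_def
    have hut : Tendsto u (𝓝[>] (1:ℝ)) (𝓝 0) := by
      have h1 : Tendsto (fun p : ℝ => 2*(p-1)) (𝓝[>] (1:ℝ)) (𝓝 0) := by
        have h0 : Tendsto (fun p : ℝ => p - 1) (𝓝 (1:ℝ)) (𝓝 0) := by
          have h := ((continuous_id (X := ℝ)).sub (continuous_const (y := (1:ℝ)))).tendsto (1:ℝ)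
          convert h using 2 <;> simp
        have := h0.const_mul (2:ℝ)
        rw [mul_zero] at this
        exact this.mono_left nhdsWithin_le_nhds
      have hlogN : Tendsto (fun p => Real.log (N p)) (𝓝[>] (1:ℝ)) (𝓝 (Real.log A)) :=
        ((Real.continuousAt_log hA.ne').tendsto).comp hNt
      have hpt : Tendsto (fun p : ℝ => p) (𝓝[>] (1:ℝ)) (𝓝 1) :=
        tendsto_id.mono_left nhdsWithin_le_nhds
      have hlogA : Tendsto (fun p : ℝ => Real.log A / p) (𝓝[>] (1:ℝ)) (𝓝 (Real.log A)) := by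
        have := (tendsto_const_nhds (x := Real.log A)).div hpt one_ne_zero
        convert this using 2 <;> simp
      have h2 := h1.mul (hlogN.sub hlogA)
      simpa using h2
    -- Step 7: identity for G on (1,2]
    have hGeq : ∀ᶠ p in 𝓝[>] (1:ℝ), G p = -(p * A) * auxPsi (u p) * S p := by
      filter_upwards [hIoc] with p hp
      obtain ⟨hp1, hp2⟩ := hp
      have hpne : p - 1 ≠ 0 := sub_ne_zero.mpr (ne_of_gt hp1)
      have hp0 : (0:ℝ) < p := by linarith
      have hNp : 0 < N p := hpos p ⟨hp1, hp2⟩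
      rw [hG p]
      have hexp : N p ^ p * (A / N p ^ p) ^ (2/p - 1) = A * Real.exp (u p) := by
        have hNpp : 0 < N p ^ p := Real.rpow_pos_of_pos hNp p
        have hp0' : p ≠ 0 := hp0.ne'
        rw [Real.rpow_def_of_pos (div_pos hA hNpp), Real.log_div hA.ne' hNpp.ne',
          Real.log_rpow hNp, Real.rpow_def_of_pos hNp, ← Real.exp_add]
        nth_rewrite 2 [show A = Real.exp (Real.log A) from (Real.exp_log hA).symm]
        rw [← Real.exp_add]
        congr 1
        simp only [hu_def]
        field_simp
        ring
      rw [hexp]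
      set L : ℝ := Real.log (N p) - Real.log A / p with hL_def
      have hupL : u p = 2*(p-1)*L := by simp only [hu_def, hL_def]
      have hSL : S p = (p-1)⁻¹ * L := by simp only [hS_def, hL_def]
      rcases eq_or_ne (u p) 0 with hu0 | hu0
      · have hL : L = 0 := by
          have h2 : (2:ℝ)*(p-1) ≠ 0 := by
            intro h
            rcases mul_eq_zero.mp h with h' | h'
            · norm_num at h'
            · exact hpne h'
          rw [hupL] at hu0
          rcases mul_eq_zero.mp hu0 with h | h
          · exact absurd h h2
          · exact h
        have hS0 : S p = 0 := by rw [hSL, hL, mul_zero]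
        rw [hu0, hS0, Real.exp_zero]
        ring
      · simp only [auxPsi, if_neg hu0]
        have hL : L ≠ 0 := by
          intro h; apply hu0; rw [hupL, h]; ring
        rw [hupL, hSL]
        have h2L : 2*(p-1)*L ≠ 0 := by rw [← hupL]; exact hu0
        generalize Real.exp (2*(p-1)*L) = X
        field_simp
        ring
    -- assemble
    have hpt : Tendsto (fun p : ℝ => p) (𝓝[>] (1:ℝ)) (𝓝 1) :=
      tendsto_id.mono_left nhdsWithin_le_nhds
    have hfinal : Tendsto (fun p => -(p * A) * auxPsi (u p) * S p) (𝓝[>] (1:ℝ))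
        (𝓝 (-(1 * A) * 1 * (A⁻¹ * (-Ep) + Real.log A))) := by
      have h1 : Tendsto (fun p : ℝ => -(p * A)) (𝓝[>] (1:ℝ)) (𝓝 (-(1*A))) :=
        (hpt.mul tendsto_const_nhds).neg
      have h2 : Tendsto (fun p => auxPsi (u p)) (𝓝[>] (1:ℝ)) (𝓝 1) :=
        auxPsi_tendsto.comp hut
      exact (h1.mul h2).mul hSt
    have hval : -(1 * A) * 1 * (A⁻¹ * (-Ep) + Real.log A) = Ep - A * Real.log A := by
      field_simp
      ring
    rw [hval] at hfinal
    exact (Tendsto.congr' (hGeq.mono fun p hp => hp.symm) hfinal)
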